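/- arXiv:hep-th/9911100 — 3 statements merged into one kernel-verified Lean document; each statement's English description precedes it below -/
import Mathlib

section
/- Global causality criterion: let e, e' ∈ S^{d−1} be Euclidean unit vectors in ℝ^d and τ, τ' ∈ ℝ with |τ − τ'| ≤ π. Then q(Ξ(e,τ) − Ξ(e',τ')) > 0 (global timelike separation) if and only if |τ − τ'| > arccos(e·e'), and q(Ξ(e,τ) − Ξ(e',τ')) < 0 (global spacelike separation) if and only if |τ − τ'| < arccos(e·e'). -/
/-!
Fix an integer d ≥ 1, written as d = n+1.
Minkowski space ℝ^d is `Fin (n+1) → ℝ`, with Minkowski bilinear form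
⟨x,y⟩ = x⁰y⁰ − Σ_{i=1}^{d−1} xⁱyⁱ.
The ambient space ℝ^{d+2} is modeled as `ℝ × (Fin (n+1) → ℝ) × ℝ`,
the three components holding ξ⁰, (ξ¹,…,ξ^d) and ξ^{d+1} respectively,
with quadratic form q(ξ) = (ξ⁰)² + (ξ^{d+1})² − Σ_{i=1}^{d} (ξⁱ)².
-/

noncomputable section

open Real

/-- Minkowski bilinear form ⟨x,y⟩ = x⁰y⁰ − Σ_{i=1}^{d−1} xⁱyⁱ on ℝ^d, d = n+1. -/
def mink (n : ℕ) (x y : Fin (n + 1) → ℝ) : ℝ :=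
  x 0 * y 0 - ∑ i : Fin n, x i.succ * y i.succ

/-- Minkowski square x² = ⟨x,x⟩. -/
def minkSq (n : ℕ) (x : Fin (n + 1) → ℝ) : ℝ := mink n x x

/-- The ambient space ℝ^{d+2}: components (ξ⁰, (ξ¹,…,ξ^d), ξ^{d+1}). -/
abbrev Ambient (n : ℕ) := ℝ × (Fin (n + 1) → ℝ) × ℝ

/-- The quadratic form q(ξ) = (ξ⁰)² + (ξ^{d+1})² − Σ_{i=1}^{d}(ξⁱ)² of signature (2,d). -/
def ambQ (n : ℕ) (ξ : Ambient n) : ℝ := ξ.1 ^ 2 + ξ.2.2 ^ 2 - ∑ i, ξ.2.1 i ^ 2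

/-- The Dirac–Weyl embedding: ξ(x)^μ = x^μ (0 ≤ μ ≤ d−1), ξ(x)^d = ½(1+x²),
ξ(x)^{d+1} = ½(1−x²). -/
def diracWeyl (n : ℕ) (x : Fin (n + 1) → ℝ) : Ambient n :=
  (x 0, Fin.snoc (fun i : Fin n => x i.succ) ((1 + minkSq n x) / 2), (1 - minkSq n x) / 2)

/-- The cylinder parametrization Ξ(e,τ) = (sin τ, e¹, …, e^d, cos τ). -/
def cyl (n : ℕ) (e : Fin (n + 1) → ℝ) (τ : ℝ) : Ambient n :=
  (Real.sin τ, e, Real.cos τ)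

/-- The projective (stereographic) coordinate π(ξ) = (ξ⁰,…,ξ^{d−1})/(ξ^d + ξ^{d+1}). -/
def stereo (n : ℕ) (ξ : Ambient n) : Fin (n + 1) → ℝ :=
  fun j => (Fin.cons ξ.1 (fun i : Fin n => ξ.2.1 i.castSucc) : Fin (n + 1) → ℝ) j / (ξ.2.1 (Fin.last n) + ξ.2.2)

/-- global causality criterion: for |τ − τ'| ≤ π,
q(Ξ(e,τ) − Ξ(e',τ')) > 0 iff |τ − τ'| > arccos(e·e'), and
q(Ξ(e,τ) − Ξ(e',τ')) < 0 iff |τ − τ'| < arccos(e·e'). -/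
theorem stmt_4 (n : ℕ) (e e' : Fin (n + 1) → ℝ)
    (he : ∑ i, e i ^ 2 = 1) (he' : ∑ i, e' i ^ 2 = 1) (τ τ' : ℝ)
    (hττ' : |τ - τ'| ≤ Real.pi) :
    (0 < ambQ n (cyl n e τ - cyl n e' τ') ↔ Real.arccos (∑ i, e i * e' i) < |τ - τ'|) ∧
    (ambQ n (cyl n e τ - cyl n e' τ') < 0 ↔ |τ - τ'| < Real.arccos (∑ i, e i * e' i)) := by
  set S := ∑ i, e i * e' i with hS
  have hcs : S ^ 2 ≤ 1 := by
    have := Finset.sum_mul_sq_le_sq_mul_sq Finset.univ e e'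
    simpa [he, he'] using this
  have hSlo : -1 ≤ S := by nlinarith
  have hShi : S ≤ 1 := by nlinarith
  have hq : ambQ n (cyl n e τ - cyl n e' τ') = 2 * (S - Real.cos (τ - τ')) := by
    have hsum : ∑ i, (e i - e' i) ^ 2 = 2 - 2 * S := by
      have : ∑ i, (e i - e' i) ^ 2 = (∑ i, e i ^ 2) + (∑ i, e' i ^ 2) - 2 * ∑ i, e i * e' i := by
        rw [← Finset.sum_add_distrib, Finset.mul_sum, ← Finset.sum_sub_distrib]
        apply Finset.sum_congr rfl
        intro i _
        ring
      rw [this, he, he', hS]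
      ring
    have hcossin : Real.cos (τ - τ') = Real.cos τ * Real.cos τ' + Real.sin τ * Real.sin τ' :=
      Real.cos_sub τ τ'
    have hs : Real.sin τ ^ 2 + Real.cos τ ^ 2 = 1 := Real.sin_sq_add_cos_sq τ
    have hs' : Real.sin τ' ^ 2 + Real.cos τ' ^ 2 = 1 := Real.sin_sq_add_cos_sq τ'
    simp only [ambQ, cyl, Prod.fst_sub, Prod.snd_sub, Pi.sub_apply]
    rw [hsum]
    nlinarith [hs, hs', hcossin]
  have hmem1 : |τ - τ'| ∈ Set.Icc 0 Real.pi := ⟨abs_nonneg _, hττ'⟩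
  have hmem2 : Real.arccos S ∈ Set.Icc 0 Real.pi :=
    ⟨Real.arccos_nonneg S, Real.arccos_le_pi S⟩
  have hcosabs : Real.cos (τ - τ') = Real.cos |τ - τ'| := (Real.cos_abs _).symm
  have hcosarc : Real.cos (Real.arccos S) = S := Real.cos_arccos hSlo hShi
  constructor
  · rw [hq]
    constructor
    · intro h
      have hlt : Real.cos |τ - τ'| < Real.cos (Real.arccos S) := by
        rw [hcosarc, ← hcosabs]; linarith
      exact (Real.strictAntiOn_cos.lt_iff_gt hmem1 hmem2).mp hlt
    · intro h
      have := Real.strictAntiOn_cos hmem2 hmem1 h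
      rw [hcosarc, ← hcosabs] at this
      linarith
  · rw [hq]
    constructor
    · intro h
      have hlt : Real.cos (Real.arccos S) < Real.cos |τ - τ'| := by
        rw [hcosarc, ← hcosabs]; linarith
      exact (Real.strictAntiOn_cos.lt_iff_gt hmem2 hmem1).mp hlt
    · intro h
      have := Real.strictAntiOn_cos hmem1 hmem2 h
      rw [hcosarc, ← hcosabs] at this
      linarith
end
end

section
/- Minkowski spacetime is exactly one tile of the cylinder: the map (e,τ) ↦ x(e,τ) = (sin τ, e¹, …, e^{d−1})/(e^d + cos τ) is a bijection from the set {(e,τ) : e ∈ S^{d−1}, −π < τ < π, e^d + cos τ > 0} onto all of ℝ^d. -/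
/-!
Fix an integer d ≥ 1, written as d = n+1.
Minkowski space ℝ^d is `Fin (n+1) → ℝ`, with Minkowski bilinear form
⟨x,y⟩ = x⁰y⁰ − Σ_{i=1}^{d−1} xⁱyⁱ.
The ambient space ℝ^{d+2} is modeled as `ℝ × (Fin (n+1) → ℝ) × ℝ`,
the three components holding ξ⁰, (ξ¹,…,ξ^d) and ξ^{d+1} respectively,
with quadratic form q(ξ) = (ξ⁰)² + (ξ^{d+1})² − Σ_{i=1}^{d} (ξⁱ)².
-/

noncomputable section

open Real

/-- The Minkowski point x(e,τ) = (sin τ, e¹, …, e^{d−1})/(e^d + cos τ). -/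
def xcoord (n : ℕ) (e : Fin (n + 1) → ℝ) (τ : ℝ) : Fin (n + 1) → ℝ :=
  fun j => (Fin.cons (Real.sin τ) (fun i : Fin n => e i.castSucc) : Fin (n + 1) → ℝ) j / (e (Fin.last n) + Real.cos τ)

/-- Positivity of the quantity x₀² + ((1−x²)/2)². -/
lemma stmt7_D_pos (n : ℕ) (x : Fin (n+1) → ℝ) :
    0 < x 0 ^ 2 + ((1 - minkSq n x)/2)^2 := by
  rcases eq_or_ne (x 0) 0 with h | h
  · have hm : minkSq n x ≤ 0 := by
      have : (0:ℝ) ≤ ∑ i : Fin n, x i.succ * x i.succ :=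
        Finset.sum_nonneg fun i _ => mul_self_nonneg _
      simp only [minkSq, mink, h]
      linarith
    nlinarith [sq_nonneg (x 0)]
  · have h2 : 0 < x 0 ^ 2 := pow_two_pos_of_ne_zero h
    nlinarith [sq_nonneg ((1 - minkSq n x)/2)]

/-- An angle in (−π, π) is determined by its sine and cosine. -/
lemma stmt7_angle_eq {a b : ℝ} (h1 : -π < a) (h2 : a < π) (h3 : -π < b) (h4 : b < π)
    (hs : Real.sin a = Real.sin b) (hc : Real.cos a = Real.cos b) : a = b := by
  have e1 := Complex.arg_cos_add_sin_mul_I (θ := a) ⟨h1, h2.le⟩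
  have e2 := Complex.arg_cos_add_sin_mul_I (θ := b) ⟨h3, h4.le⟩
  rw [← Complex.ofReal_cos, ← Complex.ofReal_sin] at e1 e2
  rw [hs, hc] at e1
  exact e1.symm.trans e2

/-- Existence of an angle in (−π, π) with prescribed sine and cosine. -/
lemma stmt7_exists_angle {a b : ℝ} (hab : a^2 + b^2 = 1) (h : a ≠ 0 ∨ 0 < b) :
    ∃ τ : ℝ, -π < τ ∧ τ < π ∧ Real.sin τ = a ∧ Real.cos τ = b := by
  set z : ℂ := ⟨b, a⟩ with hz
  have habs : ‖z‖ = 1 := by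
    rw [Complex.norm_def, Complex.normSq_mk]
    rw [show b * b + a * a = 1 by nlinarith]
    exact Real.sqrt_one
  have hz0 : z ≠ 0 := by
    intro h0
    rw [h0] at habs
    simp at habs
  refine ⟨z.arg, Complex.neg_pi_lt_arg z, ?_, ?_, ?_⟩
  · refine lt_of_le_of_ne (Complex.arg_le_pi z) ?_
    intro hpi
    rw [Complex.arg_eq_pi_iff] at hpi
    rcases h with h | h
    · exact h hpi.2
    · exact absurd hpi.1 (by simp [hz]; linarith)
  · rw [Complex.sin_arg, habs]; simp [hz]
  · rw [Complex.cos_arg hz0, habs]; simp [hz]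

lemma stmt7_aux1 (L c s r : ℝ) (hr : r = L + c) (hrne : r ≠ 0) (hpyth : s^2 + c^2 = 1) :
    s / r * (s / r) - (1 - L ^ 2) / r ^ 2 = (L - c) / r := by
  subst hr; field_simp; linear_combination hpyth

lemma stmt7_aux2 (L c s r : ℝ) (hr : r = L + c) (hrne : r ≠ 0) (hpyth : s^2 + c^2 = 1) :
    r^2 * ((s/r)^2 + ((1 - (L - c)/r)/2)^2) = 1 := by
  subst hr; field_simp; linear_combination 4 * hpyth

/-- Reconstruction: all data of (e,τ) is determined by x = xcoord n e τ. -/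
lemma stmt7_recon (n : ℕ) (e : Fin (n+1) → ℝ) (τ : ℝ)
    (he : ∑ i, e i ^ 2 = 1)
    (hr : 0 < e (Fin.last n) + Real.cos τ) :
    Real.sin τ = (e (Fin.last n) + Real.cos τ) * xcoord n e τ 0 ∧
    (∀ i : Fin n, e i.castSucc = (e (Fin.last n) + Real.cos τ) * xcoord n e τ i.succ) ∧
    Real.cos τ = (e (Fin.last n) + Real.cos τ) * ((1 - minkSq n (xcoord n e τ))/2) ∧
    e (Fin.last n) = (e (Fin.last n) + Real.cos τ) * ((1 + minkSq n (xcoord n e τ))/2) ∧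
    (e (Fin.last n) + Real.cos τ)^2 *
      (xcoord n e τ 0 ^ 2 + ((1 - minkSq n (xcoord n e τ))/2)^2) = 1 := by
  set r := e (Fin.last n) + Real.cos τ with hrdef
  have hrne : r ≠ 0 := ne_of_gt hr
  have hx0 : xcoord n e τ 0 = Real.sin τ / r := by simp [xcoord]; rfl
  have hxi : ∀ i : Fin n, xcoord n e τ i.succ = e i.castSucc / r := by
    intro i; simp [xcoord]; rfl
  have hsplit : ∑ i : Fin n, e i.castSucc ^ 2 = 1 - e (Fin.last n) ^ 2 := by
    rw [Fin.sum_univ_castSucc] at he; linarith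
  have hpyth := Real.sin_sq_add_cos_sq τ
  have hm : minkSq n (xcoord n e τ) = (e (Fin.last n) - Real.cos τ) / r := by
    simp only [minkSq, mink, hx0, hxi]
    have hsum : ∑ i : Fin n, (e i.castSucc / r) * (e i.castSucc / r)
        = (1 - e (Fin.last n) ^ 2) / r^2 := by
      rw [← hsplit, Finset.sum_div]
      exact Finset.sum_congr rfl fun i _ => by field_simp
    rw [hsum]
    exact stmt7_aux1 _ _ _ _ hrdef hrne hpyth
  refine ⟨by rw [hx0]; field_simp, fun i => by rw [hxi i]; field_simp, ?_, ?_, ?_⟩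
  · rw [hm]; field_simp; ring
  · rw [hm]; field_simp; ring
  · rw [hx0, hm]
    exact stmt7_aux2 _ _ _ _ hrdef hrne hpyth

/-- (e,τ) ↦ x(e,τ) is a bijection from
{(e,τ) : e ∈ S^{d−1}, −π < τ < π, e^d + cos τ > 0} onto all of ℝ^d. -/
theorem stmt_7 (n : ℕ) :
    Set.BijOn (fun p : (Fin (n + 1) → ℝ) × ℝ => xcoord n p.1 p.2)
      {p | (∑ i, p.1 i ^ 2 = 1) ∧ -Real.pi < p.2 ∧ p.2 < Real.pi ∧
            0 < p.1 (Fin.last n) + Real.cos p.2}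
      Set.univ := by
  refine ⟨fun p _ => trivial, ?_, ?_⟩
  · -- injectivity
    rintro ⟨e₁, τ₁⟩ ⟨h1e, h1a, h1b, h1r⟩ ⟨e₂, τ₂⟩ ⟨h2e, h2a, h2b, h2r⟩ hxy
    dsimp only at h1e h1a h1b h1r h2e h2a h2b h2r hxy
    set x := xcoord n e₁ τ₁ with hx
    obtain ⟨s1, i1, c1, l1, d1⟩ := stmt7_recon n e₁ τ₁ h1e h1r
    obtain ⟨s2, i2, c2, l2, d2⟩ := stmt7_recon n e₂ τ₂ h2e h2r
    rw [← hxy] at s2 i2 c2 l2 d2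
    set r₁ := e₁ (Fin.last n) + Real.cos τ₁ with hr1
    set r₂ := e₂ (Fin.last n) + Real.cos τ₂ with hr2
    have hD := stmt7_D_pos n x
    have hrr : r₁ = r₂ := by
      have hsq : r₁^2 = r₂^2 := mul_right_cancel₀ (ne_of_gt hD) (d1.trans d2.symm)
      have h0 : (r₁ - r₂) * (r₁ + r₂) = 0 := by linear_combination hsq
      rcases mul_eq_zero.mp h0 with h | h
      · linarith
      · linarith
    have hττ : τ₁ = τ₂ :=
      stmt7_angle_eq h1a h1b h2a h2b (by rw [s1, s2, hrr]) (by rw [c1, c2, hrr])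
    have hee : e₁ = e₂ := by
      funext j
      induction j using Fin.lastCases with
      | last => rw [l1, l2, hrr]
      | cast i => rw [i1 i, i2 i, hrr]
    exact Prod.ext hee hττ
  · -- surjectivity
    rintro x -
    have hD := stmt7_D_pos n x
    set m := minkSq n x with hmdef
    set r : ℝ := (Real.sqrt (x 0 ^ 2 + ((1 - m)/2)^2))⁻¹ with hrdef
    have hsq : Real.sqrt (x 0 ^ 2 + ((1 - m)/2)^2) > 0 := Real.sqrt_pos.mpr hD
    have hrpos : 0 < r := by positivity
    have hr2 : r^2 * (x 0 ^ 2 + ((1 - m)/2)^2) = 1 := by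
      rw [hrdef, inv_pow, Real.sq_sqrt hD.le]
      exact inv_mul_cancel₀ (ne_of_gt hD)
    have hab : (r * x 0)^2 + (r * ((1 - m)/2))^2 = 1 := by nlinarith
    have hside : r * x 0 ≠ 0 ∨ 0 < r * ((1 - m)/2) := by
      by_cases hx0 : x 0 = 0
      · right
        have hm0 : m ≤ 0 := by
          have : (0:ℝ) ≤ ∑ i : Fin n, x i.succ * x i.succ :=
            Finset.sum_nonneg fun i _ => mul_self_nonneg _
          simp only [hmdef, minkSq, mink, hx0]
          linarith
        have : 0 < (1 - m)/2 := by linarith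
        positivity
      · left
        exact mul_ne_zero (ne_of_gt hrpos) hx0
    obtain ⟨τ, hτ1, hτ2, hsin, hcos⟩ := stmt7_exists_angle hab hside
    · set e : Fin (n+1) → ℝ :=
        Fin.snoc (fun i : Fin n => r * x i.succ) (r * ((1 + m)/2)) with hedef
      have helast : e (Fin.last n) = r * ((1 + m)/2) := by simp [hedef]
      have hei : ∀ i : Fin n, e i.castSucc = r * x i.succ := by
        intro i; simp [hedef]
      have hre : e (Fin.last n) + Real.cos τ = r := by
        rw [helast, hcos]; ring
      have hS : ∑ i : Fin n, x i.succ * x i.succ = x 0 ^ 2 - m := by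
        simp only [hmdef, minkSq, mink]; ring
      refine ⟨⟨e, τ⟩, ⟨?_, hτ1, hτ2, ?_⟩, ?_⟩
      · show ∑ i : Fin (n+1), e i ^ 2 = 1
        rw [Fin.sum_univ_castSucc]
        have : ∑ i : Fin n, e i.castSucc ^ 2 = r^2 * (x 0^2 - m) := by
          rw [← hS, Finset.mul_sum]
          exact Finset.sum_congr rfl fun i _ => by rw [hei i]; ring
        rw [this, helast]
        nlinarith
      · show 0 < e (Fin.last n) + Real.cos τ
        rw [hre]; exact hrpos
      · show xcoord n e τ = x
        funext j
        have hrne : r ≠ 0 := ne_of_gt hrpos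
        simp only [xcoord, hre]
        induction j using Fin.cases
        case zero => rw [Fin.cons_zero, hsin]; field_simp
        case succ i => rw [Fin.cons_succ, hei i]; field_simp
end
end

section
/- Composition law for proper conformal transformations: for b, c, x ∈ ℝ^d, define f_b(x) = (x − b x²)/D_b(x) with D_b(x) = 1 − 2⟨b,x⟩ + b²x². If D_b(x) ≠ 0, then D_{b+c}(x) = D_b(x) · D_c(f_b(x)); and if moreover D_c(f_b(x)) ≠ 0, then f_c(f_b(x)) = f_{b+c}(x). -/
/-!
Fix an integer d ≥ 1, written as d = n+1.
Minkowski space ℝ^d is `Fin (n+1) → ℝ`, with Minkowski bilinear form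
⟨x,y⟩ = x⁰y⁰ − Σ_{i=1}^{d−1} xⁱyⁱ.
The ambient space ℝ^{d+2} is modeled as `ℝ × (Fin (n+1) → ℝ) × ℝ`,
the three components holding ξ⁰, (ξ¹,…,ξ^d) and ξ^{d+1} respectively,
with quadratic form q(ξ) = (ξ⁰)² + (ξ^{d+1})² − Σ_{i=1}^{d} (ξⁱ)².
-/

noncomputable section

open Real

/-- D_b(x) = 1 − 2⟨b,x⟩ + b²x². -/
def Dfac (n : ℕ) (b x : Fin (n + 1) → ℝ) : ℝ :=
  1 - 2 * mink n b x + minkSq n b * minkSq n x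

/-- The proper conformal transformation f_b(x) = (x − b x²)/D_b(x). -/
def confTr (n : ℕ) (b x : Fin (n + 1) → ℝ) : Fin (n + 1) → ℝ :=
  (Dfac n b x)⁻¹ • (x - minkSq n x • b)

lemma mink_comm (n : ℕ) (x y : Fin (n + 1) → ℝ) : mink n x y = mink n y x := by
  simp [mink, mul_comm]

lemma mink_add_left (n : ℕ) (x y z : Fin (n + 1) → ℝ) :
    mink n (x + y) z = mink n x z + mink n y z := by
  simp [mink, add_mul, Finset.sum_add_distrib]; ring

lemma mink_sub_left (n : ℕ) (x y z : Fin (n + 1) → ℝ) :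
    mink n (x - y) z = mink n x z - mink n y z := by
  simp [mink, sub_mul, Finset.sum_sub_distrib]; ring

lemma mink_smul_left (n : ℕ) (a : ℝ) (x y : Fin (n + 1) → ℝ) :
    mink n (a • x) y = a * mink n x y := by
  simp [mink, Finset.mul_sum, mul_sub, mul_assoc]

lemma mink_sub_right (n : ℕ) (x y z : Fin (n + 1) → ℝ) :
    mink n x (y - z) = mink n x y - mink n x z := by
  rw [mink_comm, mink_sub_left, mink_comm n y x, mink_comm n z x]

lemma mink_smul_right (n : ℕ) (a : ℝ) (x y : Fin (n + 1) → ℝ) :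
    mink n x (a • y) = a * mink n x y := by
  rw [mink_comm, mink_smul_left, mink_comm]

/-- composition law for proper conformal transformations:
if D_b(x) ≠ 0 then D_{b+c}(x) = D_b(x)·D_c(f_b(x)); if moreover D_c(f_b(x)) ≠ 0
then f_c(f_b(x)) = f_{b+c}(x). -/
theorem stmt_10 (n : ℕ) (b c x : Fin (n + 1) → ℝ) (hb : Dfac n b x ≠ 0) :
    Dfac n (b + c) x = Dfac n b x * Dfac n c (confTr n b x) ∧
    (Dfac n c (confTr n b x) ≠ 0 → confTr n c (confTr n b x) = confTr n (b + c) x) := by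
  set D := Dfac n b x with hD
  set X := minkSq n x with hX
  set B := mink n b x with hB
  set bb := minkSq n b with hbb
  set Cx := mink n c x with hCx
  set Cb := mink n c b with hCb
  set cc := minkSq n c with hcc
  have hf : confTr n b x = D⁻¹ • (x - X • b) := rfl
  -- mink c f
  have h1 : mink n c (confTr n b x) = D⁻¹ * (Cx - X * Cb) := by
    rw [hf, mink_smul_right, mink_sub_right, mink_smul_right]
  -- minkSq f
  have h2 : minkSq n (confTr n b x) = X * D⁻¹ := by
    have : minkSq n (confTr n b x)
        = D⁻¹ * (D⁻¹ * ((X - X * B) - X * (B - X * bb))) := by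
      show mink n _ _ = _
      rw [hf, mink_smul_left, mink_smul_right, mink_sub_left, mink_smul_left,
        mink_sub_right, mink_sub_right, mink_smul_right, mink_smul_right,
        mink_comm n x b]
      rfl
    rw [this]
    have hDval : D = 1 - 2 * B + bb * X := rfl
    field_simp
    rw [hDval]; ring
  -- part 1
  have hDsum : Dfac n (b + c) x = D * Dfac n c (confTr n b x) := by
    have hbc : mink n (b + c) x = B + Cx := mink_add_left n b c x
    have hbcsq : minkSq n (b + c) = bb + 2 * Cb + cc := by
      show mink n (b + c) (b + c) = _
      rw [mink_add_left, mink_comm n b (b+c), mink_add_left, mink_comm n c (b+c),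
        mink_add_left, mink_comm n b c]
      show bb + Cb + (Cb + cc) = _
      ring
    have hDval : D = 1 - 2 * B + bb * X := rfl
    show 1 - 2 * mink n (b + c) x + minkSq n (b + c) * X = _
    rw [hbc, hbcsq]
    show _ = D * (1 - 2 * mink n c (confTr n b x) + cc * minkSq n (confTr n b x))
    rw [h1, h2]
    field_simp
    rw [hDval]; ring
  refine ⟨hDsum, fun hc => ?_⟩
  set E := Dfac n c (confTr n b x) with hE
  have : confTr n c (confTr n b x) = E⁻¹ • (D⁻¹ • (x - X • b) - (X * D⁻¹) • c) := by
    rw [confTr, ← hE, ← hf, h2]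
  rw [this, confTr, hDsum, mul_inv, ← hX]
  module
end
end
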